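/- arXiv:1409.2630 — 6 statements merged into one kernel-verified Lean document; each statement's English description precedes it below -/
import Mathlib

section
/- Let X be a separable Banach space over ℂ and (T_n)_{n≥1} a sequence of bounded linear operators on X. Then (T_n) is topologically transitive if and only if J_{(T_n)}(x) = X for every x ∈ X. -/
open Filter Topology

variable {X : Type*} [NormedAddCommGroup X] [NormedSpace ℂ X] [CompleteSpace X]
  [TopologicalSpace.SeparableSpace X]

/-- The extended limit set `J_{(T_n)}(x)`: all `y` such that there exist a strictly
increasing sequence of positive integers `(k_n)` and a sequence `(x_n)` with
`x_n → x` and `T_{k_n} x_n → y`. -/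
def extLimitSet (T : ℕ → X →L[ℂ] X) (x : X) : Set X :=
  {y | ∃ k : ℕ → ℕ, StrictMono k ∧ (∀ n, 0 < k n) ∧
    ∃ u : ℕ → X, Tendsto u atTop (𝓝 x) ∧
      Tendsto (fun n => T (k n) (u n)) atTop (𝓝 y)}

/-- The sequence `(T_n)_{n≥1}` is topologically transitive. -/
def TopTransitiveSeq (T : ℕ → X →L[ℂ] X) : Prop :=
  ∀ U V : Set X, IsOpen U → IsOpen V → U.Nonempty → V.Nonempty →
    ∃ n : ℕ, 0 < n ∧ (T n '' U ∩ V).Nonempty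

/-- Key lemma: topological transitivity gives arbitrarily large indices. -/
lemma key_large (T : ℕ → X →L[ℂ] X) (hT : TopTransitiveSeq T) (N : ℕ)
    (U V : Set X) (hU : IsOpen U) (hV : IsOpen V) (hUne : U.Nonempty) (hVne : V.Nonempty) :
    ∃ n : ℕ, N < n ∧ ∃ z ∈ U, T n z ∈ V := by
  rcases subsingleton_or_nontrivial X with hsub | hnt
  · obtain ⟨z, hz⟩ := hUne
    obtain ⟨v, hv⟩ := hVne
    exact ⟨N + 1, Nat.lt_succ_self N, z, hz, (Subsingleton.elim (T (N+1) z) v) ▸ hv⟩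
  · obtain ⟨x₀, hx₀⟩ := hUne
    obtain ⟨y₀, hy₀⟩ := hVne
    obtain ⟨ε, hε, hεU⟩ := Metric.isOpen_iff.1 hU x₀ hx₀
    obtain ⟨δ, hδ, hδV⟩ := Metric.isOpen_iff.1 hV y₀ hy₀
    -- pick y₁ in ball y₀ (δ/2) avoiding the finite set {T n x₀ : 1 ≤ n ≤ N}
    haveI := Module.punctured_nhds_neBot ℂ X y₀
    have hball : (Metric.ball y₀ (δ/2)).Infinite :=
      infinite_of_mem_nhds y₀ (Metric.ball_mem_nhds y₀ (by positivity))
    have hfin : ((fun n => T n x₀) '' (Finset.Icc 1 N : Set ℕ)).Finite :=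
      Set.Finite.image _ (Finset.Icc 1 N).finite_toSet
    obtain ⟨y₁, hy₁ball, hy₁S⟩ :
        ∃ y₁ ∈ Metric.ball y₀ (δ/2), y₁ ∉ (fun n => T n x₀) '' (Finset.Icc 1 N : Set ℕ) := by
      have := (hball.diff hfin).nonempty
      obtain ⟨y₁, hy₁⟩ := this
      exact ⟨y₁, hy₁.1, hy₁.2⟩
    -- positive distance d to the finite set
    obtain ⟨d, hd, hdist⟩ : ∃ d > 0, ∀ n ∈ Finset.Icc 1 N, d ≤ ‖y₁ - T n x₀‖ := by
      rcases (Finset.Icc 1 N).eq_empty_or_nonempty with hS | hS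
      · exact ⟨1, one_pos, fun n hn => absurd hn (by simp [hS])⟩
      · refine ⟨(Finset.Icc 1 N).inf' hS (fun n => ‖y₁ - T n x₀‖), ?_, ?_⟩
        · rw [gt_iff_lt, Finset.lt_inf'_iff]
          intro n hn
          rw [norm_pos_iff, sub_ne_zero]
          exact fun h => hy₁S ⟨n, by simpa using hn, h.symm⟩
        · exact fun n hn => Finset.inf'_le _ hn
    -- uniform bound on the norms of T n, 1 ≤ n ≤ N
    set S : NNReal := (Finset.Icc 1 N).sup (fun n => ‖T n‖₊) with hSdef
    set M : ℝ := 1 + (S : ℝ) with hM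
    have hM0 : 0 < M := by
      have : (0:ℝ) ≤ (S:ℝ) := S.coe_nonneg
      simp only [hM]; linarith
    have hM1 : 1 ≤ M := by
      have : (0:ℝ) ≤ (S:ℝ) := S.coe_nonneg
      simp only [hM]; linarith
    have hMn : ∀ n ∈ Finset.Icc 1 N, ‖T n‖ ≤ M - 1 := by
      intro n hn
      have h := Finset.le_sup (f := fun n => ‖T n‖₊) hn
      rw [← hSdef] at h
      have := NNReal.coe_le_coe.2 h
      simp only [hM, coe_nnnorm] at this ⊢
      linarith
    set q : ℝ := d / (2 * M) with hq
    have hqpos : 0 < q := by rw [hq]; positivity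
    have hq3 : M * q = d / 2 := by rw [hq]; field_simp
    set ε' : ℝ := min ε q with hε'
    have hε'pos : 0 < ε' := lt_min hε (by positivity)
    set r : ℝ := min (δ/2) (d/2) with hr
    have hrpos : 0 < r := lt_min (by positivity) (by positivity)
    clear_value S M q ε' r
    -- the shrunken sets miss T n for 1 ≤ n ≤ N
    have hmiss : ∀ n ∈ Finset.Icc 1 N, ∀ u ∈ Metric.ball x₀ ε', T n u ∉ Metric.ball y₁ r := by
      intro n hn u hu hcon
      have h1 : ‖T n u - T n x₀‖ < d / 2 := by
        have hle : ‖T n u - T n x₀‖ ≤ ‖T n‖ * ‖u - x₀‖ := by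
          simpa [← map_sub] using (T n).le_opNorm (u - x₀)
        have hu' : ‖u - x₀‖ < ε' := by rwa [Metric.mem_ball, dist_eq_norm] at hu
        have hub : ‖u - x₀‖ < q :=
          lt_of_lt_of_le hu' (by rw [hε']; exact min_le_right _ _)
        have step1 : (M - 1) * ‖u - x₀‖ ≤ (M - 1) * q :=
          mul_le_mul_of_nonneg_left hub.le (by linarith)
        have step2 : (M - 1) * q < M * q :=
          mul_lt_mul_of_pos_right (by linarith) hqpos
        have step4 : ‖T n‖ * ‖u - x₀‖ ≤ (M - 1) * ‖u - x₀‖ :=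
          mul_le_mul_of_nonneg_right (hMn n hn) (norm_nonneg _)
        linarith
      have h2 : ‖y₁ - T n u‖ < d / 2 := by
        have hcon' : ‖y₁ - T n u‖ < r := by
          rwa [Metric.mem_ball, dist_eq_norm, norm_sub_rev] at hcon
        exact lt_of_lt_of_le hcon' (by rw [hr]; exact min_le_right _ _)
      have h3 : d ≤ ‖y₁ - T n x₀‖ := hdist n hn
      have : ‖y₁ - T n x₀‖ ≤ ‖y₁ - T n u‖ + ‖T n u - T n x₀‖ := norm_sub_le_norm_sub_add_norm_sub _ _ _
      linarith
    -- apply transitivity to the shrunken sets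
    obtain ⟨n, hn0, w, ⟨z, hzU', hzw⟩, hwV'⟩ :=
      hT (Metric.ball x₀ ε') (Metric.ball y₁ r) Metric.isOpen_ball Metric.isOpen_ball
        ⟨x₀, Metric.mem_ball_self hε'pos⟩ ⟨y₁, Metric.mem_ball_self hrpos⟩
    have hnN : N < n := by
      by_contra hle
      exact hmiss n (Finset.mem_Icc.2 ⟨hn0, Nat.le_of_not_lt hle⟩) z hzU' (hzw ▸ hwV')
    refine ⟨n, hnN, z, hεU (lt_of_lt_of_le hzU' (by simp [hε'] : ε' ≤ ε)), ?_⟩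
    apply hδV
    have h4 : dist (T n z) y₁ < δ/2 := by
      have hmem := hzw ▸ hwV'
      rw [Metric.mem_ball, hr] at hmem
      exact lt_of_lt_of_le hmem (min_le_left _ _)
    have h5 : dist y₁ y₀ < δ/2 := hy₁ball
    calc dist (T n z) y₀ ≤ dist (T n z) y₁ + dist y₁ y₀ := dist_triangle _ _ _
      _ < δ := by linarith

theorem stmt2 (T : ℕ → X →L[ℂ] X) :
    TopTransitiveSeq T ↔ ∀ x : X, extLimitSet T x = Set.univ := by
  constructor
  · intro hT x
    ext y
    simp only [Set.mem_univ, iff_true]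
    -- For each N, m, find n > N and z close to x with T n z close to y
    have H : ∀ N m : ℕ, ∃ n : ℕ, N < n ∧ ∃ z : X,
        z ∈ Metric.ball x (1 / (m + 1)) ∧ T n z ∈ Metric.ball y (1 / (m + 1)) := by
      intro N m
      have hpos : (0:ℝ) < 1 / (m + 1) := by positivity
      obtain ⟨n, hn, z, hz1, hz2⟩ := key_large T hT N (Metric.ball x (1/(m+1)))
        (Metric.ball y (1/(m+1))) Metric.isOpen_ball Metric.isOpen_ball
        ⟨x, Metric.mem_ball_self hpos⟩ ⟨y, Metric.mem_ball_self hpos⟩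
      exact ⟨n, hn, z, hz1, hz2⟩
    choose F hFlt z hz1 hz2 using H
    -- build the recursion
    let g : ℕ → ℕ × X := fun m => Nat.rec (F 0 0, z 0 0)
      (fun m p => (F p.1 (m+1), z p.1 (m+1))) m
    have hg0 : g 0 = (F 0 0, z 0 0) := rfl
    have hgs : ∀ m, g (m+1) = (F (g m).1 (m+1), z (g m).1 (m+1)) := fun m => rfl
    set k : ℕ → ℕ := fun m => (g m).1 with hk
    set u : ℕ → X := fun m => (g m).2 with hu
    have hku : ∀ m : ℕ, u m ∈ Metric.ball x (1/(m+1)) ∧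
        T (k m) (u m) ∈ Metric.ball y (1/(m+1)) := by
      intro m
      cases m with
      | zero => exact ⟨hz1 0 0, hz2 0 0⟩
      | succ m => exact ⟨hz1 (k m) (m+1), hz2 (k m) (m+1)⟩
    have hkmono : StrictMono k := by
      apply strictMono_nat_of_lt_succ
      intro m
      have : k (m+1) = F (k m) (m+1) := rfl
      rw [this]
      exact hFlt (k m) (m+1)
    have hkpos : ∀ m, 0 < k m := by
      intro m
      have h0 : 0 < k 0 := hFlt 0 0
      exact lt_of_lt_of_le h0 (hkmono.monotone (Nat.zero_le m))
    refine ⟨k, hkmono, hkpos, u, ?_, ?_⟩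
    · rw [tendsto_iff_norm_sub_tendsto_zero]
      refine squeeze_zero (fun m => norm_nonneg _) (fun m => ?_)
        tendsto_one_div_add_atTop_nhds_zero_nat
      exact le_of_lt (by simpa [dist_eq_norm] using (hku m).1)
    · rw [tendsto_iff_norm_sub_tendsto_zero]
      refine squeeze_zero (fun m => norm_nonneg _) (fun m => ?_)
        tendsto_one_div_add_atTop_nhds_zero_nat
      exact le_of_lt (by simpa [dist_eq_norm] using (hku m).2)
  · intro h U V hU hV hUne hVne
    obtain ⟨x, hx⟩ := hUne
    obtain ⟨y, hy⟩ := hVne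
    have hyJ : y ∈ extLimitSet T x := by rw [h x]; trivial
    obtain ⟨k, hkmono, hkpos, u, hux, hTy⟩ := hyJ
    have h1 : ∀ᶠ n in atTop, u n ∈ U := hux.eventually (hU.mem_nhds hx)
    have h2 : ∀ᶠ n in atTop, T (k n) (u n) ∈ V := hTy.eventually (hV.mem_nhds hy)
    obtain ⟨n, hn1, hn2⟩ := (h1.and h2).exists
    exact ⟨k n, hkpos n, T (k n) (u n), ⟨u n, hn1, rfl⟩, hn2⟩
end

section
/- Let X be a separable Banach space over ℂ and (T_n)_{n≥1} a sequence of bounded linear operators on X. Suppose (x_k) and (y_k) are sequences in X with x_k → x and y_k → y for some x, y ∈ X. If y_k ∈ J_{(T_n)}(x_k) for every k = 1, 2, 3, ..., then y ∈ J_{(T_n)}(x). -/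
open Filter Topology

variable {X : Type*} [NormedAddCommGroup X] [NormedSpace ℂ X] [CompleteSpace X]
  [TopologicalSpace.SeparableSpace X]

lemma extLimitSet_key (T : ℕ → X →L[ℂ] X) (a b : X) (hab : b ∈ extLimitSet T a)
    (ε : ℝ) (hε : 0 < ε) (N : ℕ) :
    ∃ p : ℕ × X, N < p.1 ∧ ‖p.2 - a‖ < ε ∧ ‖T p.1 p.2 - b‖ < ε := by
  obtain ⟨k, hk, -, w, hw, hTw⟩ := hab
  rw [Metric.tendsto_atTop] at hw hTw
  obtain ⟨M₁, hM₁⟩ := hw ε hε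
  obtain ⟨M₂, hM₂⟩ := hTw ε hε
  refine ⟨⟨k (max (max M₁ M₂) (N + 1)), w (max (max M₁ M₂) (N + 1))⟩, ?_, ?_, ?_⟩
  · exact lt_of_lt_of_le (Nat.lt_succ_self N)
      (le_trans (le_max_right _ _) (hk.le_apply))
  · simpa [dist_eq_norm] using hM₁ _ (le_trans (le_max_left _ _) (le_max_left _ _))
  · simpa [dist_eq_norm] using hM₂ _ (le_trans (le_max_right _ _) (le_max_left _ _))

theorem stmt3 (T : ℕ → X →L[ℂ] X) (x y : X) (u v : ℕ → X)
    (hu : Tendsto u atTop (𝓝 x)) (hv : Tendsto v atTop (𝓝 y))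
    (h : ∀ k : ℕ, v k ∈ extLimitSet T (u k)) :
    y ∈ extLimitSet T x := by
  have H : ∀ k N : ℕ, ∃ p : ℕ × X, N < p.1 ∧ ‖p.2 - u k‖ < 1 / (k + 1) ∧
      ‖T p.1 p.2 - v k‖ < 1 / (k + 1) := by
    intro k N
    exact extLimitSet_key T (u k) (v k) (h k) (1 / (k + 1)) (by positivity) N
  choose F h1 h2 h3 using H
  set g : ℕ → ℕ × X := fun k => Nat.rec (F 0 0) (fun k ih => F (k + 1) ih.1) k with hg
  set m : ℕ → ℕ := fun k => (g k).1 with hm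
  set w : ℕ → X := fun k => (g k).2 with hw
  have hgk : ∀ k, ‖w k - u k‖ < 1 / (k + 1) ∧ ‖T (m k) (w k) - v k‖ < 1 / (k + 1) := by
    intro k
    cases k with
    | zero => exact ⟨h2 0 0, h3 0 0⟩
    | succ n => exact ⟨h2 (n + 1) (m n), h3 (n + 1) (m n)⟩
  have hmono : StrictMono m := by
    apply strictMono_nat_of_lt_succ
    intro n
    exact h1 (n + 1) (m n)
  have hpos : ∀ k, 0 < m k := by
    intro k
    exact lt_of_le_of_lt (Nat.zero_le 0) (lt_of_lt_of_le (h1 0 0) (hmono.monotone (Nat.zero_le k)))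
  have hlim : Tendsto (fun k : ℕ => (1 : ℝ) / (k + 1)) atTop (𝓝 0) :=
    tendsto_one_div_add_atTop_nhds_zero_nat
  have hw0 : Tendsto (fun k => w k - u k) atTop (𝓝 0) :=
    squeeze_zero_norm (fun k => (hgk k).1.le) hlim
  have hT0 : Tendsto (fun k => T (m k) (w k) - v k) atTop (𝓝 0) :=
    squeeze_zero_norm (fun k => (hgk k).2.le) hlim
  refine ⟨m, hmono, hpos, w, ?_, ?_⟩
  · have := hw0.add hu
    simpa using this
  · have := hT0.add hv
    simpa using this
end

section
/- Let X be a separable Banach space over ℂ and (T_n)_{n≥1} a sequence of bounded linear operators on X such that T_n → T uniformly on X (i.e., in operator norm) for some bounded linear operator T on X. Let x, y ∈ X. If T_n y ∈ J_{(T_n)}(T_n x) for every n = 1, 2, 3, ..., then T y ∈ J_{(T_n)}(T x). -/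
open Filter Topology

variable {X : Type*} [NormedAddCommGroup X] [NormedSpace ℂ X] [CompleteSpace X]
  [TopologicalSpace.SeparableSpace X]

theorem stmt4 (T : ℕ → X →L[ℂ] X) (S : X →L[ℂ] X)
    (hconv : Tendsto T atTop (𝓝 S)) (x y : X)
    (h : ∀ n : ℕ, 0 < n → T n y ∈ extLimitSet T (T n x)) :
    S y ∈ extLimitSet T (S x) := by
  -- Key selection lemma
  have key : ∀ n B : ℕ, ∃ (j : ℕ) (w : X), B < j ∧ 0 < j ∧
      ‖w - T (n+1) x‖ < 1/(n+1) ∧ ‖T j w - T (n+1) y‖ < 1/(n+1) := by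
    intro n B
    obtain ⟨k, hk, hkpos, u, hu, hTu⟩ := h (n+1) n.succ_pos
    have hε : (0:ℝ) < 1/(n+1) := by positivity
    obtain ⟨N1, hN1⟩ := (Metric.tendsto_atTop.mp hu) _ hε
    obtain ⟨N2, hN2⟩ := (Metric.tendsto_atTop.mp hTu) _ hε
    obtain ⟨N3, hN3⟩ := (hk.tendsto_atTop.eventually_gt_atTop B).exists_forall_of_atTop
    set m := max N1 (max N2 N3)
    refine ⟨k m, u m, hN3 m (le_trans (le_max_right _ _) (le_max_right _ _)), hkpos m, ?_, ?_⟩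
    · have := hN1 m (le_max_left _ _)
      rwa [dist_eq_norm] at this
    · have := hN2 m (le_trans (le_max_left _ _) (le_max_right _ _))
      rwa [dist_eq_norm] at this
  choose j w hjB hjpos hw hTw using key
  set g : ℕ → ℕ × X := fun n =>
    Nat.rec (j 0 0, w 0 0) (fun n p => (j (n+1) p.1, w (n+1) p.1)) n with hg
  have hprop : ∀ n, 0 < (g n).1 ∧ ‖(g n).2 - T (n+1) x‖ < 1/(n+1) ∧
      ‖T (g n).1 (g n).2 - T (n+1) y‖ < 1/(n+1) := by
    intro n
    cases n with
    | zero => exact ⟨hjpos 0 0, hw 0 0, hTw 0 0⟩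
    | succ m => exact ⟨hjpos (m+1) (g m).1, hw (m+1) (g m).1, hTw (m+1) (g m).1⟩
  have hmono : StrictMono (fun n => (g n).1) := by
    apply strictMono_nat_of_lt_succ
    intro n
    exact hjB (n+1) (g n).1
  -- norm of T n - S tends to 0
  have hTS : Tendsto (fun n => ‖T n - S‖) atTop (𝓝 0) := by
    have := tendsto_iff_norm_sub_tendsto_zero.mp hconv
    simpa using this
  have hinv : Tendsto (fun n : ℕ => 1/((n:ℝ)+1)) atTop (𝓝 0) :=
    tendsto_one_div_add_atTop_nhds_zero_nat
  -- auxiliary: for any z, T (n+1) z → S z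
  have haux : ∀ z : X, Tendsto (fun n => ‖T (n+1) z - S z‖) atTop (𝓝 0) := by
    intro z
    have hb : Tendsto (fun n => ‖T (n+1) - S‖ * ‖z‖) atTop (𝓝 0) := by
      have h1 : Tendsto (fun n => ‖T (n+1) - S‖) atTop (𝓝 0) :=
        hTS.comp (tendsto_add_atTop_nat 1)
      simpa using h1.mul_const ‖z‖
    refine squeeze_zero (fun n => norm_nonneg _) (fun n => ?_) hb
    calc ‖T (n+1) z - S z‖ = ‖(T (n+1) - S) z‖ := by simp
      _ ≤ ‖T (n+1) - S‖ * ‖z‖ := (T (n+1) - S).le_opNorm z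
  refine ⟨fun n => (g n).1, hmono, fun n => (hprop n).1, fun n => (g n).2, ?_, ?_⟩
  · rw [tendsto_iff_norm_sub_tendsto_zero]
    have hb : Tendsto (fun n : ℕ => 1/((n:ℝ)+1) + ‖T (n+1) x - S x‖) atTop (𝓝 0) := by
      simpa using hinv.add (haux x)
    refine squeeze_zero (fun n => norm_nonneg _) (fun n => ?_) hb
    calc ‖(g n).2 - S x‖ ≤ ‖(g n).2 - T (n+1) x‖ + ‖T (n+1) x - S x‖ := by
          simpa [dist_eq_norm] using dist_triangle ((g n).2) (T (n+1) x) (S x)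
      _ ≤ 1/((n:ℝ)+1) + ‖T (n+1) x - S x‖ := by
          have := ((hprop n).2.1).le
          push_cast at this ⊢
          linarith
  · rw [tendsto_iff_norm_sub_tendsto_zero]
    have hb : Tendsto (fun n : ℕ => 1/((n:ℝ)+1) + ‖T (n+1) y - S y‖) atTop (𝓝 0) := by
      simpa using hinv.add (haux y)
    refine squeeze_zero (fun n => norm_nonneg _) (fun n => ?_) hb
    calc ‖T ((g n).1) ((g n).2) - S y‖
          ≤ ‖T ((g n).1) ((g n).2) - T (n+1) y‖ + ‖T (n+1) y - S y‖ := by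
          simpa [dist_eq_norm] using dist_triangle (T ((g n).1) ((g n).2)) (T (n+1) y) (S y)
      _ ≤ 1/((n:ℝ)+1) + ‖T (n+1) y - S y‖ := by
          have := ((hprop n).2.2).le
          push_cast at this ⊢
          linarith
end

section
/- Let X be a separable Banach space over ℂ and (T_n)_{n≥1} a sequence of bounded linear operators on X. Then the set A = {x ∈ X : J_{(T_n)}(x) = X} is closed and connected. -/
open Filter Topology

variable {X : Type*} [NormedAddCommGroup X] [NormedSpace ℂ X] [CompleteSpace X]
  [TopologicalSpace.SeparableSpace X]

lemma extLimitSet_smul (T : ℕ → X →L[ℂ] X) (c : ℂ) {x y : X}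
    (h : y ∈ extLimitSet T x) : c • y ∈ extLimitSet T (c • x) := by
  obtain ⟨k, hk1, hk2, u, hu, hTu⟩ := h
  exact ⟨k, hk1, hk2, fun n => c • u n, hu.const_smul c, by
    simpa [map_smul] using hTu.const_smul c⟩

lemma extLimitSet_univ_smul (T : ℕ → X →L[ℂ] X) {c : ℂ} (hc : c ≠ 0) {x : X}
    (h : extLimitSet T x = Set.univ) : extLimitSet T (c • x) = Set.univ := by
  ext z
  simp only [Set.mem_univ, iff_true]
  have hz : c⁻¹ • z ∈ extLimitSet T x := h ▸ Set.mem_univ _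
  simpa [smul_inv_smul₀ hc] using extLimitSet_smul T c hz

lemma mem_extLimitSet_of_tendsto (T : ℕ → X →L[ℂ] X) {x : ℕ → X} {x0 y : X}
    (hx : Tendsto x atTop (𝓝 x0)) (h : ∀ m, y ∈ extLimitSet T (x m)) :
    y ∈ extLimitSet T x0 := by
  choose k hk1 hk2 u hu hTu using h
  have pick : ∀ m B, ∃ n, B < k m n ∧ dist (u m n) (x m) < 1/(m+1) ∧
      dist (T (k m n) (u m n)) y < 1/(m+1) := by
    intro m B
    have hε : (0:ℝ) < 1/(m+1) := by positivity
    have h1 : ∀ᶠ n in atTop, B < k m n := ((hk1 m).tendsto_atTop).eventually_gt_atTop B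
    have h2 := (Metric.tendsto_nhds.mp (hu m)) _ hε
    have h3 := (Metric.tendsto_nhds.mp (hTu m)) _ hε
    exact (((h1.and h2).and h3).exists).imp (fun n hn => ⟨hn.1.1, hn.1.2, hn.2⟩)
  choose F hF using pick
  set N : ℕ → ℕ := fun m => Nat.rec (F 0 0) (fun m ih => F (m+1) (k m ih)) m with hN
  have hspec : ∀ m, dist (u m (N m)) (x m) < 1/(m+1) ∧
      dist (T (k m (N m)) (u m (N m))) y < 1/(m+1) := by
    intro m
    cases m with
    | zero => exact (hF 0 0).2
    | succ m => exact (hF (m+1) (k m (N m))).2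
  have hmono : StrictMono (fun m => k m (N m)) := by
    apply strictMono_nat_of_lt_succ
    intro m
    exact (hF (m+1) (k m (N m))).1
  refine ⟨fun m => k m (N m), hmono, fun m => hk2 m (N m), fun m => u m (N m), ?_, ?_⟩
  · rw [tendsto_iff_dist_tendsto_zero]
    refine squeeze_zero (fun m => dist_nonneg)
      (g := fun m => 1/(m+1) + dist (x m) x0) ?_ ?_
    · intro m
      calc dist (u m (N m)) x0 ≤ dist (u m (N m)) (x m) + dist (x m) x0 :=
            dist_triangle _ _ _
        _ ≤ 1/(m+1) + dist (x m) x0 := by linarith [(hspec m).1]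
    · simpa using tendsto_one_div_add_atTop_nhds_zero_nat.add
        (tendsto_iff_dist_tendsto_zero.mp hx)
  · rw [tendsto_iff_dist_tendsto_zero]
    exact squeeze_zero (fun m => dist_nonneg) (fun m => (hspec m).2.le)
      tendsto_one_div_add_atTop_nhds_zero_nat

theorem stmt10 (T : ℕ → X →L[ℂ] X) :
    IsClosed {x : X | extLimitSet T x = Set.univ} ∧
      IsPreconnected {x : X | extLimitSet T x = Set.univ} := by
  set A := {x : X | extLimitSet T x = Set.univ} with hA
  have hmem : ∀ {x : X}, x ∈ A ↔ extLimitSet T x = Set.univ := fun {x} => Iff.rfl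
  have hclosed : IsClosed A := by
    apply IsSeqClosed.isClosed
    intro x x0 hxA hx
    rw [hmem]
    ext y
    simp only [Set.mem_univ, iff_true]
    exact mem_extLimitSet_of_tendsto T hx
      (fun m => (hmem.mp (hxA m)) ▸ Set.mem_univ y)
  refine ⟨hclosed, ?_⟩
  rcases A.eq_empty_or_nonempty with hA0 | ⟨x₀, hx₀⟩
  · rw [hA0]; exact isPreconnected_empty
  have h0 : (0:X) ∈ A := by
    set c : ℕ → ℂ := fun m => ((1/(m+1):ℝ) : ℂ) with hc
    have hcne : ∀ m, c m ≠ 0 := by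
      intro m
      simp only [hc, ne_eq, Complex.ofReal_eq_zero]
      positivity
    have hmemA : ∀ m, (c m) • x₀ ∈ A :=
      fun m => hmem.mpr (extLimitSet_univ_smul T (hcne m) (hmem.mp hx₀))
    have htend : Tendsto (fun m => (c m) • x₀) atTop (𝓝 (0:X)) := by
      have h1 : Tendsto c atTop (𝓝 (0:ℂ)) := by
        have h := (Complex.continuous_ofReal.tendsto (0:ℝ)).comp
          tendsto_one_div_add_atTop_nhds_zero_nat
        rw [Complex.ofReal_zero] at h
        exact h
      simpa using h1.smul_const x₀
    rw [hmem]
    ext y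
    simp only [Set.mem_univ, iff_true]
    exact mem_extLimitSet_of_tendsto T htend
      (fun m => (hmem.mp (hmemA m)) ▸ Set.mem_univ y)
  apply isPreconnected_of_forall (0:X)
  intro y hy
  refine ⟨segment ℝ 0 y, ?_, left_mem_segment _ _ _, right_mem_segment _ _ _,
    (convex_segment _ _).isPreconnected⟩
  rintro z ⟨a, b, ha, hb, hab, rfl⟩
  rcases eq_or_lt_of_le hb with hb0 | hbpos
  · simpa [← hb0] using h0
  · have : (b:ℂ) ≠ 0 := by
      simp only [ne_eq, Complex.ofReal_eq_zero]
      exact ne_of_gt hbpos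
    have := extLimitSet_univ_smul T this (hmem.mp hy) (x := y)
    rw [hmem]
    simpa [Complex.coe_smul] using this
end

section
/- Let X be a separable Banach space over ℂ, T a bounded linear operator on X, and x ∈ X. If J_T(x) = X, then J_T(Tx) = X. Consequently, for a sequence (T_n)_{n≥1} of bounded linear operators on X, the set A = ⋃_{n≥1} {x ∈ X : J_{T_n}(x) = X} satisfies T_n({x ∈ X : J_{T_n}(x) = X}) ⊆ A for every n. -/
open Filter Topology

variable {X : Type*} [NormedAddCommGroup X] [NormedSpace ℂ X] [CompleteSpace X]
  [TopologicalSpace.SeparableSpace X]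

/-- The extended limit set `J_T(x)` of a single operator `T`, defined via the iterates
`T^{k_n}`: all `y` such that there exist a strictly increasing sequence of positive
integers `(k_n)` and a sequence `(x_n)` with `x_n → x` and `T^{k_n} x_n → y`. -/
def extLimitSetIter (T : X →L[ℂ] X) (x : X) : Set X :=
  {y | ∃ k : ℕ → ℕ, StrictMono k ∧ (∀ n, 0 < k n) ∧
    ∃ u : ℕ → X, Tendsto u atTop (𝓝 x) ∧
      Tendsto (fun n => (T ^ (k n)) (u n)) atTop (𝓝 y)}

theorem stmt12 :
    (∀ (T : X →L[ℂ] X) (x : X),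
        extLimitSetIter T x = Set.univ → extLimitSetIter T (T x) = Set.univ) ∧
    (∀ (T : ℕ → X →L[ℂ] X) (n : ℕ), 0 < n →
        T n '' {x : X | extLimitSetIter (T n) x = Set.univ} ⊆
          ⋃ m ∈ {m : ℕ | 0 < m}, {x : X | extLimitSetIter (T m) x = Set.univ}) := by
  have main : ∀ (T : X →L[ℂ] X) (x : X),
      extLimitSetIter T x = Set.univ → extLimitSetIter T (T x) = Set.univ := by
    intro T x h
    ext y
    simp only [Set.mem_univ, iff_true]
    have hy : y ∈ extLimitSetIter T x := h ▸ Set.mem_univ y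
    obtain ⟨k, hk, hkpos, u, hu, hTu⟩ := hy
    have h2 : ∀ n, 2 ≤ k (n + 1) := by
      intro n
      have h0 := hkpos 0
      have := hk (show 0 < n + 1 by omega)
      omega
    refine ⟨fun n => k (n + 1) - 1, ?_, ?_, fun n => T (u (n + 1)), ?_, ?_⟩
    · intro a b hab
      show k (a + 1) - 1 < k (b + 1) - 1
      have := hk (show a + 1 < b + 1 by omega)
      have := h2 a
      omega
    · intro n
      show 0 < k (n + 1) - 1
      have := h2 n
      omega
    · exact (T.continuous.tendsto x).comp (hu.comp (tendsto_add_atTop_nat 1))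
    · have key : ∀ n, (T ^ (k (n + 1) - 1)) (T (u (n + 1))) = (T ^ (k (n + 1))) (u (n + 1)) := by
        intro n
        conv_rhs => rw [show k (n + 1) = (k (n + 1) - 1) + 1 from by have := h2 n; omega]
        simp [pow_succ, ContinuousLinearMap.mul_apply]
      simp only [key]
      exact hTu.comp (tendsto_add_atTop_nat 1)
  refine ⟨main, ?_⟩
  rintro T n hn y ⟨x, hx, rfl⟩
  exact Set.mem_biUnion hn (main (T n) x hx)
end

section
/- Let X be a separable Banach space over ℂ and (T_n)_{n≥1} a sequence of bounded linear operators on X. Suppose there exists a vector x ∈ X such that J_{(T_n)}(x) has nonempty interior. Then for every sequence of complex numbers (λ_n) with λ_n → 0, the linear span of the union ⋃_{n≥1} Range(T_n − λ_n I) is dense in X. -/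
open Filter Topology

variable {X : Type*} [NormedAddCommGroup X] [NormedSpace ℂ X] [CompleteSpace X]
  [TopologicalSpace.SeparableSpace X]

theorem stmt15 (T : ℕ → X →L[ℂ] X) (x : X)
    (hint : (interior (extLimitSet T x)).Nonempty)
    (lam : ℕ → ℂ) (hlam : Tendsto lam atTop (𝓝 0)) :
    Dense (Submodule.span ℂ
      (⋃ n ∈ {n : ℕ | 0 < n}, Set.range fun z : X => T n z - lam n • z) : Set X) := by
  set M : Submodule ℂ X := Submodule.span ℂ
      (⋃ n ∈ {n : ℕ | 0 < n}, Set.range fun z : X => T n z - lam n • z) with hMdef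
  by_contra hd
  obtain ⟨x₀, hx₀⟩ : ∃ x₀ : X, x₀ ∉ closure (M : Set X) := by
    by_contra h
    push_neg at h
    exact hd fun y => h y
  have hconv : Convex ℝ (closure (M : Set X)) :=
    ((Submodule.restrictScalars ℝ M).convex).closure
  obtain ⟨f, c, hfa, hfx⟩ :=
    RCLike.geometric_hahn_banach_closed_point (𝕜 := ℂ) hconv isClosed_closure hx₀
  -- f vanishes on M
  have hf0 : ∀ a ∈ M, f a = 0 := by
    intro a ha
    by_contra hfa0
    have hsq : 0 < Complex.normSq (f a) := Complex.normSq_pos.2 hfa0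
    have key : ∀ t : ℝ, t * Complex.normSq (f a) < c := by
      intro t
      have hmem : ((t : ℂ) * (starRingEnd ℂ) (f a)) • a ∈ M := M.smul_mem _ ha
      have h := hfa _ (subset_closure hmem)
      have heq : f (((t : ℂ) * (starRingEnd ℂ) (f a)) • a)
          = ((t * Complex.normSq (f a) : ℝ) : ℂ) := by
        rw [map_smul]
        simp only [smul_eq_mul]
        rw [mul_assoc, mul_comm ((starRingEnd ℂ) (f a)), Complex.mul_conj]
        push_cast
        ring
      rw [heq] at h
      simpa using h
    have := key ((c + 1) / Complex.normSq (f a))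
    rw [div_mul_cancel₀ _ (ne_of_gt hsq)] at this
    linarith
  -- hence f (T n z) = lam n * f z for all n ≥ 1
  have hTn : ∀ n, 0 < n → ∀ z : X, f (T n z) = lam n * f z := by
    intro n hn z
    have hmem : T n z - lam n • z ∈ M := by
      apply Submodule.subset_span
      exact Set.mem_biUnion hn ⟨z, rfl⟩
    have := hf0 _ hmem
    rw [map_sub, map_smul, sub_eq_zero] at this
    simpa using this
  -- f vanishes on the extended limit set
  have hJ : extLimitSet T x ⊆ ((LinearMap.ker ((f : X →L[ℂ] ℂ) : X →ₗ[ℂ] ℂ) : Submodule ℂ X) : Set X) := by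
    rintro y ⟨k, hk, hkpos, u, hu, hTu⟩
    have h1 : Tendsto (fun n => f (T (k n) (u n))) atTop (𝓝 (f y)) :=
      (f.continuous.tendsto y).comp hTu
    have h2 : (fun n => f (T (k n) (u n))) = fun n => lam (k n) * f (u n) :=
      funext fun n => hTn _ (hkpos n) _
    have h3 : Tendsto (fun n => lam (k n) * f (u n)) atTop (𝓝 (0 * f x)) :=
      (hlam.comp hk.tendsto_atTop).mul ((f.continuous.tendsto x).comp hu)
    rw [h2] at h1
    have : f y = 0 * f x := tendsto_nhds_unique h1 h3
    simpa [LinearMap.mem_ker] using this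
  -- so ker f has nonempty interior, hence is ⊤
  have hker : (LinearMap.ker ((f : X →L[ℂ] ℂ) : X →ₗ[ℂ] ℂ) : Submodule ℂ X) = ⊤ := by
    apply Submodule.eq_top_of_nonempty_interior'
    obtain ⟨y, hy⟩ := hint
    exact ⟨y, interior_mono hJ hy⟩
  -- so f = 0, contradicting u < re (f x₀)
  have hfx₀ : f x₀ = 0 := by
    have : x₀ ∈ LinearMap.ker ((f : X →L[ℂ] ℂ) : X →ₗ[ℂ] ℂ) := hker ▸ Submodule.mem_top
    exact this
  have h0 : (0 : ℝ) < c := by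
    have := hfa 0 (subset_closure M.zero_mem)
    simpa using this
  rw [hfx₀] at hfx
  simp at hfx
  linarith
end
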